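/- Let G be a relevant position of the game influence. For every y ∈ R(G) and every i ∈ {1,2}, s^L_i(G) ≥ s^L_i(G_y); similarly, for every x ∈ L(G) and every i ∈ {1,2}, s^R_i(G) ≥ s^R_i(G_x). -/

import Mathlib

namespace Influence

open Finset

/-- A position of the game `influence`: a finite directed graph with vertex set `V`,
arc set `A`, and the set `left` of Left (black) vertices; Right's vertices are `V \ left`. -/
structure Pos (α : Type) [DecidableEq α] where
  V : Finset α
  A : Finset (α × α)
  left : Finset α

variable {α : Type} [DecidableEq α]

namespace Pos

/-- The set of Right vertices. -/
def R (G : Pos α) : Finset α := G.V \ G.left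

/-- Well-formedness: arcs join vertices, and Left vertices are vertices. -/
def WF (G : Pos α) : Prop :=
  (∀ p ∈ G.A, p.1 ∈ G.V ∧ p.2 ∈ G.V) ∧ G.left ⊆ G.V

open Classical in
/-- `Succ G x`: vertices reachable from `x` by a directed path (including `x` itself). -/
noncomputable def Succ (G : Pos α) (x : α) : Finset α :=
  G.V.filter (fun z => Relation.ReflTransGen (fun a b => (a, b) ∈ G.A) x z)

open Classical in
/-- `Pred G y`: vertices from which `y` is reachable by a directed path (including `y`). -/
noncomputable def Pred (G : Pos α) (y : α) : Finset α :=
  G.V.filter (fun z => Relation.ReflTransGen (fun a b => (a, b) ∈ G.A) z y)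

open Classical in
noncomputable def ForcL (G : Pos α) : Finset α :=
  G.left.filter (fun x => G.Succ x ⊆ G.left)

open Classical in
noncomputable def ForcR (G : Pos α) : Finset α :=
  G.R.filter (fun y => G.Pred y ⊆ G.R)

noncomputable def Forc (G : Pos α) : Finset α := G.ForcL ∪ G.ForcR

/-- A relevant position: no forced vertices. -/
def Relevant (G : Pos α) : Prop := G.Forc = ∅

/-- The induced subgraph `G ∖ S` on `V(G) \ S`. -/
def erase (G : Pos α) (S : Finset α) : Pos α :=
  ⟨G.V \ S, G.A.filter (fun p => p.1 ∈ G.V \ S ∧ p.2 ∈ G.V \ S), G.left \ S⟩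

open Classical in
/-- The set of vertices removed when playing `x`:  for `x ∈ L`,
`Rmv(G,x) = Succ(G,x) ∪ Forc(G ∖ Succ(G,x))`; for `y ∈ R`,
`Rmv(G,y) = Pred(G,y) ∪ Forc(G ∖ Pred(G,y))`. -/
noncomputable def Rmv (G : Pos α) (x : α) : Finset α :=
  if x ∈ G.left then G.Succ x ∪ (G.erase (G.Succ x)).Forc
  else G.Pred x ∪ (G.erase (G.Pred x)).Forc

/-- The resulting relevant position `G_x` after the move `x`. -/
noncomputable def move (G : Pos α) (x : α) : Pos α := G.erase (G.Rmv x)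

mutual
/-- Auxiliary (fuel-indexed) score of Left playing first. -/
noncomputable def sL1Aux : ℕ → Pos α → ℕ
  | 0, _ => 0
  | k + 1, G =>
      if G.left.Nonempty then
        G.left.sup (fun x => (G.Rmv x).card + sL2Aux k (G.move x))
      else 0

/-- Auxiliary (fuel-indexed) score of Left playing second. -/
noncomputable def sL2Aux : ℕ → Pos α → ℕ
  | 0, _ => 0
  | k + 1, G =>
      if h : G.R.Nonempty then G.R.inf' h (fun y => sL1Aux k (G.move y))
      else 0
end

mutual
/-- Auxiliary (fuel-indexed) score of Right playing first. -/
noncomputable def sR1Aux : ℕ → Pos α → ℕ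
  | 0, _ => 0
  | k + 1, G =>
      if G.R.Nonempty then
        G.R.sup (fun y => (G.Rmv y).card + sR2Aux k (G.move y))
      else 0

/-- Auxiliary (fuel-indexed) score of Right playing second. -/
noncomputable def sR2Aux : ℕ → Pos α → ℕ
  | 0, _ => 0
  | k + 1, G =>
      if h : G.left.Nonempty then G.left.inf' h (fun x => sR1Aux k (G.move x))
      else 0
end

/-- `s^L_1(G)`: the score of Left when Left plays first (optimal play). -/
noncomputable def sL1 (G : Pos α) : ℕ := sL1Aux G.V.card G

/-- `s^L_2(G)`: the score of Left when Right plays first (optimal play). -/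
noncomputable def sL2 (G : Pos α) : ℕ := sL2Aux G.V.card G

/-- `s^R_1(G)`: the score of Right when Right plays first (optimal play). -/
noncomputable def sR1 (G : Pos α) : ℕ := sR1Aux G.V.card G

/-- `s^R_2(G)`: the score of Right when Left plays first (optimal play). -/
noncomputable def sR2 (G : Pos α) : ℕ := sR2Aux G.V.card G

/-- The Left score `Ls(G) = s^L_1(G) - s^R_2(G)`. -/
noncomputable def Ls (G : Pos α) : ℤ := (G.sL1 : ℤ) - (G.sR2 : ℤ)

/-- The Right score `Rs(G) = s^L_2(G) - s^R_1(G)`. -/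
noncomputable def Rs (G : Pos α) : ℤ := (G.sL2 : ℤ) - (G.sR1 : ℤ)

/-- Disjoint union (game sum) of two positions. -/
def union (G G' : Pos α) : Pos α := ⟨G.V ∪ G'.V, G.A ∪ G'.A, G.left ∪ G'.left⟩

/-- The empty position. -/
protected def empty : Pos α := ⟨∅, ∅, ∅⟩

end Pos

/-- The sum of a finite list of positions. -/
def sumList (l : List (Pos α)) : Pos α := l.foldr Pos.union Pos.empty

open Classical in
/-- `G` is a segment: its vertex set is a set of at least two consecutive integers,
Left's vertices are the even ones, Right's the odd ones, and there is an arc from each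
even vertex to each of its (odd) neighbours `±1` lying in the vertex set. -/
def IsSegment (G : Pos ℤ) : Prop :=
  2 ≤ G.V.card ∧
  (∀ i j k : ℤ, i ∈ G.V → j ∈ G.V → i ≤ k → k ≤ j → k ∈ G.V) ∧
  G.left = G.V.filter (fun n => Even n) ∧
  G.A = (G.V ×ˢ G.V).filter (fun p => Even p.1 ∧ (p.2 = p.1 + 1 ∨ p.2 = p.1 - 1))

/-- `G` is the finite disjoint union (game sum) of the list `l` of segments. -/
def IsSegUnion (G : Pos ℤ) (l : List (Pos ℤ)) : Prop :=
  (∀ H ∈ l, IsSegment H) ∧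
  l.Pairwise (fun H H' => Disjoint H.V H'.V) ∧
  G = sumList l


open Classical in
/-- `G` is an alternated cycle: obtained from a segment `S` with an even number of
vertices by adding the arc `(x, y)` where `x` is the endpoint of `S` in `L` (even) and
`y` the endpoint in `R` (odd). -/
def IsAltCycle (G : Pos ℤ) : Prop :=
  ∃ (S : Pos ℤ) (x y : ℤ), IsSegment S ∧ Even S.V.card ∧
    x ∈ S.V ∧ y ∈ S.V ∧ Even x ∧ ¬ Even y ∧
    (∀ z ∈ S.V, min x y ≤ z ∧ z ≤ max x y) ∧
    G.V = S.V ∧ G.left = S.left ∧ G.A = insert (x, y) S.A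

open Classical in
/-- `T` is (a copy of) the oriented tree `T_n^c`: a rooted tree of depth `n+1`, all arcs
oriented from parent to child, in which every vertex at level `k ≤ n-1` has exactly `3`
children, every vertex at level `n` has exactly `c` children, the leaves (level `n+1`)
are the Right vertices and all other vertices are Left vertices. -/
def IsTnc (n c : ℕ) (T : Pos α) : Prop :=
  T.WF ∧ ∃ lvl : α → ℕ,
    (∀ v ∈ T.V, lvl v ≤ n + 1) ∧
    T.left = T.V.filter (fun v => lvl v ≤ n) ∧
    (∃! r, r ∈ T.V ∧ lvl r = 0) ∧
    (∀ p ∈ T.A, lvl p.2 = lvl p.1 + 1) ∧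
    (∀ v ∈ T.V, 0 < lvl v → ∃! u, (u, v) ∈ T.A) ∧
    (∀ v ∈ T.V, lvl v < n → (T.V.filter (fun w => (v, w) ∈ T.A)).card = 3) ∧
    (∀ v ∈ T.V, lvl v = n → (T.V.filter (fun w => (v, w) ∈ T.A)).card = c)

/-- `J` is (a copy of) `J_n^c`, the disjoint union of two disjoint copies of `T_n^c`. -/
def IsJnc (n c : ℕ) (J : Pos α) : Prop :=
  ∃ T1 T2 : Pos α, IsTnc n c T1 ∧ IsTnc n c T2 ∧ Disjoint T1.V T2.V ∧ J = T1.union T2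

end Influence

namespace Influence
namespace Pos

open Relation Finset

variable {α : Type} [DecidableEq α]

/-- The arc relation of a position. -/
def rel (G : Pos α) (a b : α) : Prop := (a, b) ∈ G.A

lemma pos_ext {G H : Pos α} (h1 : G.V = H.V) (h2 : G.A = H.A) (h3 : G.left = H.left) :
    G = H := by cases G; cases H; simp_all

@[simp] lemma erase_V (G : Pos α) (S : Finset α) : (G.erase S).V = G.V \ S := rfl
@[simp] lemma erase_left (G : Pos α) (S : Finset α) : (G.erase S).left = G.left \ S := rfl

lemma mem_erase_A {G : Pos α} {S : Finset α} {p : α × α} :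
    p ∈ (G.erase S).A ↔ p ∈ G.A ∧ (p.1 ∈ G.V ∧ p.1 ∉ S) ∧ (p.2 ∈ G.V ∧ p.2 ∉ S) := by
  simp only [erase, Finset.mem_filter, Finset.mem_sdiff]

lemma mem_R {G : Pos α} {y : α} : y ∈ G.R ↔ y ∈ G.V ∧ y ∉ G.left := Finset.mem_sdiff

lemma WF.erase' {G : Pos α} (h : G.WF) (S : Finset α) : (G.erase S).WF := by
  constructor
  · intro p hp
    have := mem_erase_A.1 hp
    exact ⟨Finset.mem_sdiff.2 this.2.1, Finset.mem_sdiff.2 this.2.2⟩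
  · exact Finset.sdiff_subset_sdiff h.2 (Finset.Subset.refl S)

lemma erase_erase (G : Pos α) (S T : Finset α) :
    (G.erase S).erase T = G.erase (S ∪ T) := by
  apply pos_ext
  · show (G.V \ S) \ T = G.V \ (S ∪ T)
    ext a; simp only [Finset.mem_sdiff, Finset.mem_union]; tauto
  · show Finset.filter _ (Finset.filter _ G.A) = Finset.filter _ G.A
    rw [Finset.filter_filter]
    apply Finset.filter_congr
    intro p _
    simp only [erase_V, Finset.mem_sdiff, Finset.mem_union]
    constructor
    · rintro ⟨⟨⟨h1,h2⟩,⟨h3,h4⟩⟩,⟨⟨_,h5⟩,⟨_,h6⟩⟩⟩; tauto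
    · tauto
  · show (G.left \ S) \ T = G.left \ (S ∪ T)
    ext a; simp only [Finset.mem_sdiff, Finset.mem_union]; tauto

lemma erase_congr (G : Pos α) {S T : Finset α} (h : S = T) : G.erase S = G.erase T := by rw [h]

/-! ### Succ and Pred -/

lemma mem_Succ {G : Pos α} {x z : α} :
    z ∈ G.Succ x ↔ z ∈ G.V ∧ Relation.ReflTransGen G.rel x z := by
  simp only [Succ, Finset.mem_filter]; rfl

lemma mem_Pred {G : Pos α} {y z : α} :
    z ∈ G.Pred y ↔ z ∈ G.V ∧ Relation.ReflTransGen G.rel z y := by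
  simp only [Pred, Finset.mem_filter]; rfl

lemma self_mem_Succ {G : Pos α} {x : α} (hx : x ∈ G.V) : x ∈ G.Succ x :=
  mem_Succ.2 ⟨hx, ReflTransGen.refl⟩

lemma self_mem_Pred {G : Pos α} {y : α} (hy : y ∈ G.V) : y ∈ G.Pred y :=
  mem_Pred.2 ⟨hy, ReflTransGen.refl⟩

lemma Succ_subset_V {G : Pos α} {x : α} : G.Succ x ⊆ G.V := fun _ h => (mem_Succ.1 h).1

lemma Pred_subset_V {G : Pos α} {y : α} : G.Pred y ⊆ G.V := fun _ h => (mem_Pred.1 h).1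

lemma mem_Succ_trans {G : Pos α} {x z w : α} (h1 : z ∈ G.Succ x) (h2 : w ∈ G.Succ z) :
    w ∈ G.Succ x :=
  mem_Succ.2 ⟨(mem_Succ.1 h2).1, ReflTransGen.trans (mem_Succ.1 h1).2 (mem_Succ.1 h2).2⟩

lemma mem_Pred_trans {G : Pos α} {y z w : α} (h1 : w ∈ G.Pred z) (h2 : z ∈ G.Pred y) :
    w ∈ G.Pred y :=
  mem_Pred.2 ⟨(mem_Pred.1 h1).1, ReflTransGen.trans (mem_Pred.1 h1).2 (mem_Pred.1 h2).2⟩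

lemma mem_Succ_arc {G : Pos α} {x z w : α} (hz : z ∈ G.Succ x) (ha : G.rel z w)
    (hw : w ∈ G.V) : w ∈ G.Succ x :=
  mem_Succ.2 ⟨hw, ReflTransGen.tail (mem_Succ.1 hz).2 ha⟩

lemma mem_Pred_arc {G : Pos α} {y z w : α} (hz : z ∈ G.Pred y) (ha : G.rel w z)
    (hw : w ∈ G.V) : w ∈ G.Pred y :=
  mem_Pred.2 ⟨hw, ReflTransGen.head ha (mem_Pred.1 hz).2⟩

lemma arc_mem_Succ {G : Pos α} {z w : α} (ha : G.rel z w) (hz : z ∈ G.V) (hw : w ∈ G.V) :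
    w ∈ G.Succ z := mem_Succ_arc (self_mem_Succ hz) ha hw

lemma arc_mem_Pred {G : Pos α} {z w : α} (ha : G.rel z w) (hz : z ∈ G.V) (hw : w ∈ G.V) :
    z ∈ G.Pred w := mem_Pred_arc (self_mem_Pred hw) ha hz

lemma mem_Pred_of_mem_Succ {G : Pos α} {x z : α} (h : z ∈ G.Succ x) (hx : x ∈ G.V) :
    x ∈ G.Pred z := mem_Pred.2 ⟨hx, (mem_Succ.1 h).2⟩

lemma rel_erase_mono {G : Pos α} {S T : Finset α} (hST : S ⊆ T) {a b : α}
    (h : (G.erase T).rel a b) : (G.erase S).rel a b := by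
  have := mem_erase_A.1 h
  exact mem_erase_A.2 ⟨this.1, ⟨this.2.1.1, fun hh => this.2.1.2 (hST hh)⟩,
    ⟨this.2.2.1, fun hh => this.2.2.2 (hST hh)⟩⟩

lemma rel_erase {G : Pos α} {S : Finset α} {a b : α} (h : (G.erase S).rel a b) : G.rel a b :=
  (mem_erase_A.1 h).1

lemma Succ_erase_mono {G : Pos α} {S T : Finset α} (hST : S ⊆ T) {x z : α}
    (h : z ∈ (G.erase T).Succ x) : z ∈ (G.erase S).Succ x := by
  obtain ⟨hz, hp⟩ := mem_Succ.1 h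
  obtain ⟨hz1, hz2⟩ := Finset.mem_sdiff.1 hz
  exact mem_Succ.2 ⟨Finset.mem_sdiff.2 ⟨hz1, fun hh => hz2 (hST hh)⟩,
    ReflTransGen.mono (p := (G.erase S).rel) (fun _ _ hab => rel_erase_mono hST hab) _ _ hp⟩

lemma Pred_erase_mono {G : Pos α} {S T : Finset α} (hST : S ⊆ T) {y z : α}
    (h : z ∈ (G.erase T).Pred y) : z ∈ (G.erase S).Pred y := by
  obtain ⟨hz, hp⟩ := mem_Pred.1 h
  obtain ⟨hz1, hz2⟩ := Finset.mem_sdiff.1 hz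
  exact mem_Pred.2 ⟨Finset.mem_sdiff.2 ⟨hz1, fun hh => hz2 (hST hh)⟩,
    ReflTransGen.mono (p := (G.erase S).rel) (fun _ _ hab => rel_erase_mono hST hab) _ _ hp⟩

lemma Succ_erase_subset {G : Pos α} {S : Finset α} {x z : α}
    (h : z ∈ (G.erase S).Succ x) : z ∈ G.Succ x := by
  obtain ⟨hz, hp⟩ := mem_Succ.1 h
  exact mem_Succ.2 ⟨(Finset.mem_sdiff.1 hz).1,
    ReflTransGen.mono (p := G.rel) (fun _ _ hab => rel_erase hab) _ _ hp⟩

lemma Pred_erase_subset {G : Pos α} {S : Finset α} {y z : α}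
    (h : z ∈ (G.erase S).Pred y) : z ∈ G.Pred y := by
  obtain ⟨hz, hp⟩ := mem_Pred.1 h
  exact mem_Pred.2 ⟨(Finset.mem_sdiff.1 hz).1,
    ReflTransGen.mono (p := G.rel) (fun _ _ hab => rel_erase hab) _ _ hp⟩

/-! ### Forc -/

lemma mem_ForcL {G : Pos α} {x : α} :
    x ∈ G.ForcL ↔ x ∈ G.left ∧ G.Succ x ⊆ G.left := by
  simp only [ForcL, Finset.mem_filter]

lemma mem_ForcR {G : Pos α} {y : α} :
    y ∈ G.ForcR ↔ y ∈ G.R ∧ G.Pred y ⊆ G.R := by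
  simp only [ForcR, Finset.mem_filter]

lemma mem_Forc {G : Pos α} {x : α} : x ∈ G.Forc ↔ x ∈ G.ForcL ∨ x ∈ G.ForcR :=
  Finset.mem_union

lemma ForcL_mem_left {G : Pos α} {x : α} (h : x ∈ G.ForcL) : x ∈ G.left := (mem_ForcL.1 h).1

lemma ForcR_mem_R {G : Pos α} {y : α} (h : y ∈ G.ForcR) : y ∈ G.R := (mem_ForcR.1 h).1

lemma ForcL_closed {G : Pos α} {x z : α} (hf : x ∈ G.ForcL) (hz : z ∈ G.Succ x) :
    z ∈ G.ForcL := by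
  obtain ⟨hxl, hs⟩ := mem_ForcL.1 hf
  exact mem_ForcL.2 ⟨hs hz, fun w hw => hs (mem_Succ_trans hz hw)⟩

lemma ForcR_closed {G : Pos α} {y z : α} (hf : y ∈ G.ForcR) (hz : z ∈ G.Pred y) :
    z ∈ G.ForcR := by
  obtain ⟨hyl, hs⟩ := mem_ForcR.1 hf
  exact mem_ForcR.2 ⟨hs hz, fun w hw => hs (mem_Pred_trans hw hz)⟩

lemma forc_not_mem {G : Pos α} {S : Finset α} {f : α} (h : f ∈ (G.erase S).Forc) : f ∉ S := by
  rcases mem_Forc.1 h with h | h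
  · exact (Finset.mem_sdiff.1 (ForcL_mem_left h)).2
  · exact (Finset.mem_sdiff.1 (Finset.mem_sdiff.1 (ForcR_mem_R h)).1).2

lemma forc_mono {G : Pos α} {S T : Finset α} {f : α} (h : f ∈ (G.erase S).Forc)
    (hST : S ⊆ T) (hfT : f ∉ T) : f ∈ (G.erase T).Forc := by
  rcases mem_Forc.1 h with h | h
  · obtain ⟨hl, hs⟩ := mem_ForcL.1 h
    apply mem_Forc.2; left
    apply mem_ForcL.2
    refine ⟨Finset.mem_sdiff.2 ⟨(Finset.mem_sdiff.1 hl).1, hfT⟩, ?_⟩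
    intro w hw
    have hw' := Succ_erase_mono hST hw
    have hwl : w ∈ G.left := (Finset.mem_sdiff.1 (hs hw')).1
    exact Finset.mem_sdiff.2 ⟨hwl, (Finset.mem_sdiff.1 (Succ_subset_V hw)).2⟩
  · obtain ⟨hl, hs⟩ := mem_ForcR.1 h
    apply mem_Forc.2; right
    apply mem_ForcR.2
    have hfV : f ∈ G.V := (Finset.mem_sdiff.1 (Finset.mem_sdiff.1 hl).1).1
    have hfS : f ∉ S := (Finset.mem_sdiff.1 (Finset.mem_sdiff.1 hl).1).2
    have hfl : f ∉ G.left := by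
      intro hh
      exact (Finset.mem_sdiff.1 hl).2 (Finset.mem_sdiff.2 ⟨hh, hfS⟩)
    refine ⟨Finset.mem_sdiff.2 ⟨Finset.mem_sdiff.2 ⟨hfV, hfT⟩, ?_⟩, ?_⟩
    · intro hh
      exact hfl (Finset.mem_sdiff.1 hh).1
    · intro w hw
      have hw' := Pred_erase_mono hST hw
      have hwr := hs hw'
      have hwV : w ∈ G.V := (Finset.mem_sdiff.1 (Finset.mem_sdiff.1 hwr).1).1
      have hwnl : w ∉ G.left := by
        intro hh
        exact (Finset.mem_sdiff.1 hwr).2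
          (Finset.mem_sdiff.2 ⟨hh, (Finset.mem_sdiff.1 (Finset.mem_sdiff.1 hwr).1).2⟩)
      have hwT : w ∉ T := (Finset.mem_sdiff.1 (Pred_subset_V hw)).2
      refine Finset.mem_sdiff.2 ⟨Finset.mem_sdiff.2 ⟨hwV, hwT⟩, ?_⟩
      intro hh
      exact hwnl (Finset.mem_sdiff.1 hh).1

/-! ### Reversal duality -/

/-- The reversed position: arcs reversed, sides swapped. -/
def rev (G : Pos α) : Pos α := ⟨G.V, G.A.image Prod.swap, G.V \ G.left⟩

@[simp] lemma rev_V (G : Pos α) : (rev G).V = G.V := rfl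

lemma rev_left (G : Pos α) : (rev G).left = G.R := rfl

lemma mem_rev_A {G : Pos α} {a b : α} : (a, b) ∈ (rev G).A ↔ (b, a) ∈ G.A := by
  constructor
  · intro h
    obtain ⟨⟨c, d⟩, hcd, he⟩ := Finset.mem_image.1 h
    obtain ⟨h1, h2⟩ := Prod.mk.injEq _ _ _ _ ▸ he
    simp only [Prod.swap_prod_mk, Prod.mk.injEq] at he
    rwa [← he.1, ← he.2]
  · intro h
    exact Finset.mem_image.2 ⟨(b, a), h, rfl⟩

lemma rev_rel {G : Pos α} {a b : α} : (rev G).rel a b ↔ G.rel b a := mem_rev_A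

lemma rev_WF {G : Pos α} (h : G.WF) : (rev G).WF := by
  constructor
  · rintro ⟨a, b⟩ hp
    have := (h.1 (b, a) (mem_rev_A.1 hp))
    exact ⟨this.2, this.1⟩
  · exact Finset.sdiff_subset

lemma rev_R {G : Pos α} (h : G.WF) : (rev G).R = G.left := by
  show G.V \ (G.V \ G.left) = G.left
  exact Finset.sdiff_sdiff_eq_self h.2

private lemma rtg_flip {r s : α → α → Prop} (h : ∀ a b, r a b → s b a) {a b : α}
    (hab : Relation.ReflTransGen r a b) : Relation.ReflTransGen s b a := by
  induction hab with
  | refl => exact ReflTransGen.refl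
  | tail _ h2 ih => exact ReflTransGen.head (h _ _ h2) ih

lemma rev_Succ (G : Pos α) (x : α) : (rev G).Succ x = G.Pred x := by
  ext z
  rw [mem_Succ, mem_Pred]
  constructor
  · rintro ⟨hz, hp⟩
    exact ⟨hz, rtg_flip (fun a b hab => rev_rel.1 hab) hp⟩
  · rintro ⟨hz, hp⟩
    exact ⟨hz, rtg_flip (fun a b hab => rev_rel.2 hab) hp⟩

lemma rev_Pred (G : Pos α) (y : α) : (rev G).Pred y = G.Succ y := by
  ext z
  rw [mem_Succ, mem_Pred]
  constructor
  · rintro ⟨hz, hp⟩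
    exact ⟨hz, rtg_flip (fun a b hab => rev_rel.1 hab) hp⟩
  · rintro ⟨hz, hp⟩
    exact ⟨hz, rtg_flip (fun a b hab => rev_rel.2 hab) hp⟩

lemma rev_ForcL (G : Pos α) : (rev G).ForcL = G.ForcR := by
  ext z
  rw [mem_ForcL, mem_ForcR, rev_left, rev_Succ]

lemma rev_ForcR {G : Pos α} (h : G.WF) : (rev G).ForcR = G.ForcL := by
  ext z
  rw [mem_ForcR, mem_ForcL, rev_R h, rev_Pred]

lemma rev_Forc {G : Pos α} (h : G.WF) : (rev G).Forc = G.Forc := by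
  show (rev G).ForcL ∪ (rev G).ForcR = G.ForcL ∪ G.ForcR
  rw [rev_ForcL, rev_ForcR h, Finset.union_comm]

lemma rev_erase (G : Pos α) (S : Finset α) : rev (G.erase S) = (rev G).erase S := by
  apply pos_ext
  · rfl
  · ext ⟨a, b⟩
    rw [mem_rev_A, mem_erase_A, mem_erase_A, mem_rev_A]
    simp only [rev_V, erase_V, Finset.mem_sdiff]
    tauto
  · show (G.V \ S) \ (G.left \ S) = (G.V \ G.left) \ S
    ext a
    simp only [Finset.mem_sdiff]
    tauto

lemma rev_Relevant {G : Pos α} (h : G.WF) : (rev G).Relevant ↔ G.Relevant := by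
  unfold Relevant
  rw [rev_Forc h]

lemma Pred_eq_empty {G : Pos α} (hwf : G.WF) {u : α} (hu : u ∉ G.V) : G.Pred u = ∅ := by
  ext z
  simp only [Finset.notMem_empty, iff_false]
  intro hz
  obtain ⟨hzV, hp⟩ := mem_Pred.1 hz
  rcases (ReflTransGen.cases_tail hp) with h | ⟨c, _, h2⟩
  · exact hu (h ▸ hzV)
  · exact hu (hwf.1 _ h2).2

lemma Succ_eq_empty {G : Pos α} (hwf : G.WF) {u : α} (hu : u ∉ G.V) : G.Succ u = ∅ := by
  have := Pred_eq_empty (rev_WF hwf) (by simpa using hu : u ∉ (rev G).V)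
  rwa [rev_Pred] at this

lemma rev_Rmv {G : Pos α} (hwf : G.WF) (u : α) : (rev G).Rmv u = G.Rmv u := by
  by_cases huV : u ∈ G.V
  · by_cases hul : u ∈ G.left
    · have h1 : u ∉ (rev G).left := by
        rw [rev_left]
        exact fun hh => (mem_R.1 hh).2 hul
      rw [Rmv, Rmv, if_neg h1, if_pos hul, rev_Pred, ← rev_erase, rev_Forc (WF.erase' hwf _)]
    · have h1 : u ∈ (rev G).left := by
        rw [rev_left]; exact mem_R.2 ⟨huV, hul⟩
      rw [Rmv, Rmv, if_pos h1, if_neg hul, rev_Succ, ← rev_erase, rev_Forc (WF.erase' hwf _)]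
  · have h1 : u ∉ (rev G).left := by
      rw [rev_left]; exact fun hh => huV (mem_R.1 hh).1
    have h2 : u ∉ G.left := fun hh => huV (hwf.2 hh)
    rw [Rmv, Rmv, if_neg h1, if_neg h2, rev_Pred,
      Succ_eq_empty hwf huV, Pred_eq_empty hwf huV, ← rev_erase, rev_Forc (WF.erase' hwf _)]

lemma rev_move {G : Pos α} (hwf : G.WF) (u : α) : rev (G.move u) = (rev G).move u := by
  unfold move
  rw [rev_erase, rev_Rmv hwf]

/-! ### Moves yield relevant positions -/

lemma forcL_erase_forc {G : Pos α} (hwf : G.WF) :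
    (G.erase G.Forc).ForcL ⊆ G.ForcL := by
  intro z hz
  obtain ⟨hzl, hsub⟩ := mem_ForcL.1 hz
  obtain ⟨hzl', hzF⟩ := Finset.mem_sdiff.1 hzl
  have hzV : z ∈ G.V := hwf.2 hzl'
  have key : ∀ w, Relation.ReflTransGen G.rel z w →
      w ∈ (G.erase G.Forc).Succ z ∨ w ∈ G.ForcL := by
    intro w hw
    induction hw with
    | refl => exact Or.inl (self_mem_Succ (Finset.mem_sdiff.2 ⟨hzV, hzF⟩))
    | @tail b c _ h2 ih =>
      have hcV : c ∈ G.V := (hwf.1 _ h2).2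
      rcases ih with hb | hb
      · have hbV' : b ∈ (G.erase G.Forc).V := Succ_subset_V hb
        by_cases hcF : c ∈ G.Forc
        · rcases mem_Forc.1 hcF with hc | hc
          · exact Or.inr hc
          · have hbP : b ∈ G.Pred c :=
              arc_mem_Pred h2 (Finset.mem_sdiff.1 hbV').1 hcV
            have : b ∈ G.ForcR := ForcR_closed hc hbP
            exact absurd (mem_Forc.2 (Or.inr this)) (Finset.mem_sdiff.1 hbV').2
        · have harc : (G.erase G.Forc).rel b c := by
            apply mem_erase_A.2
            exact ⟨h2, ⟨(Finset.mem_sdiff.1 hbV').1, (Finset.mem_sdiff.1 hbV').2⟩, ⟨hcV, hcF⟩⟩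
          exact Or.inl (mem_Succ_arc hb harc (Finset.mem_sdiff.2 ⟨hcV, hcF⟩))
      · exact Or.inr (ForcL_closed hb (mem_Succ.2 ⟨hcV, ReflTransGen.single h2⟩))
  apply mem_ForcL.2
  refine ⟨hzl', ?_⟩
  intro w hw
  rcases key w (mem_Succ.1 hw).2 with h | h
  · exact (Finset.mem_sdiff.1 (hsub h)).1
  · exact ForcL_mem_left h

lemma forc_erase_forc {G : Pos α} (hwf : G.WF) : (G.erase G.Forc).Forc = ∅ := by
  rw [Finset.eq_empty_iff_forall_notMem]
  intro f hf
  rcases mem_Forc.1 hf with h | h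
  · have h1 : f ∈ G.ForcL := forcL_erase_forc hwf h
    have h2 : f ∉ G.Forc := (Finset.mem_sdiff.1 (ForcL_mem_left h)).2
    exact h2 (mem_Forc.2 (Or.inl h1))
  · have h0 : f ∈ (rev (G.erase G.Forc)).ForcL := by rw [rev_ForcL]; exact h
    rw [rev_erase] at h0
    have h0' : f ∈ ((rev G).erase (rev G).Forc).ForcL := by
      rwa [rev_Forc hwf]
    have h1 : f ∈ (rev G).ForcL := forcL_erase_forc (rev_WF hwf) h0'
    rw [rev_ForcL] at h1
    have h2 : f ∉ G.Forc := by
      have := ForcR_mem_R h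
      rw [mem_R] at this
      exact (Finset.mem_sdiff.1 this.1).2
    exact h2 (mem_Forc.2 (Or.inr h1))

lemma forc_erase_union {G : Pos α} (hwf : G.WF) (B : Finset α) :
    (G.erase (B ∪ (G.erase B).Forc)).Forc = ∅ := by
  rw [← erase_erase]
  exact forc_erase_forc (WF.erase' hwf B)

lemma Rmv_eq_left {G : Pos α} {x : α} (hx : x ∈ G.left) :
    G.Rmv x = G.Succ x ∪ (G.erase (G.Succ x)).Forc := if_pos hx

lemma Rmv_eq_right {G : Pos α} {y : α} (hy : y ∉ G.left) :
    G.Rmv y = G.Pred y ∪ (G.erase (G.Pred y)).Forc := if_neg hy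

lemma relevant_move {G : Pos α} (hwf : G.WF) (u : α) : (G.move u).Relevant := by
  show (G.move u).Forc = ∅
  unfold move
  by_cases hu : u ∈ G.left
  · rw [Rmv_eq_left hu]; exact forc_erase_union hwf _
  · rw [Rmv_eq_right hu]; exact forc_erase_union hwf _

lemma move_WF {G : Pos α} (hwf : G.WF) (u : α) : (G.move u).WF := WF.erase' hwf _

@[simp] lemma move_V (G : Pos α) (u : α) : (G.move u).V = G.V \ G.Rmv u := rfl

@[simp] lemma move_left (G : Pos α) (u : α) : (G.move u).left = G.left \ G.Rmv u := rfl

lemma mem_Rmv_self {G : Pos α} {u : α} (hu : u ∈ G.V) : u ∈ G.Rmv u := by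
  by_cases h : u ∈ G.left
  · rw [Rmv_eq_left h]; exact Finset.mem_union_left _ (self_mem_Succ hu)
  · rw [Rmv_eq_right h]; exact Finset.mem_union_left _ (self_mem_Pred hu)

lemma card_move_lt {G : Pos α} {u : α} (hu : u ∈ G.V) :
    (G.move u).V.card < G.V.card := by
  apply Finset.card_lt_card
  rw [move_V]
  constructor
  · exact Finset.sdiff_subset
  · intro hsub
    exact (Finset.mem_sdiff.1 (hsub hu)).2 (mem_Rmv_self hu)

lemma mem_move_V {G : Pos α} {u z : α} :
    z ∈ (G.move u).V ↔ z ∈ G.V ∧ z ∉ G.Rmv u := Finset.mem_sdiff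

lemma mem_move_left {G : Pos α} {u z : α} :
    z ∈ (G.move u).left ↔ z ∈ G.left ∧ z ∉ G.Rmv u := Finset.mem_sdiff

lemma mem_move_R {G : Pos α} {u z : α} :
    z ∈ (G.move u).R ↔ z ∈ G.R ∧ z ∉ G.Rmv u := by
  rw [mem_R, mem_R, mem_move_V, mem_move_left]
  tauto

/-! ### Paths between surviving vertices survive a move -/

lemma succ_stay_pred {G : Pos α} (hwf : G.WF) {B : Finset α}
    (hB : ∀ a b, G.rel a b → b ∈ B → a ∈ B) {u w : α} (hu : u ∈ G.V)
    (huT : u ∉ B ∪ (G.erase B).Forc) (hwT : w ∉ B ∪ (G.erase B).Forc)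
    (h : w ∈ G.Succ u) : w ∈ (G.erase (B ∪ (G.erase B).Forc)).Succ u := by
  obtain ⟨hwV, hpath⟩ := mem_Succ.1 h
  have key : ∀ v, Relation.ReflTransGen G.rel u v →
      v ∈ (G.erase (B ∪ (G.erase B).Forc)).Succ u ∨ v ∈ (G.erase B).ForcL := by
    intro v hv
    induction hv with
    | refl => exact Or.inl (self_mem_Succ (Finset.mem_sdiff.2 ⟨hu, huT⟩))
    | @tail b c _ h2 ih =>
      have hcV : c ∈ G.V := (hwf.1 _ h2).2
      rcases ih with hb | hb
      · have hbV' : b ∈ G.V ∧ b ∉ B ∪ (G.erase B).Forc :=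
          Finset.mem_sdiff.1 (Succ_subset_V hb)
        have hbB : b ∉ B := fun hh => hbV'.2 (Finset.mem_union_left _ hh)
        have hbF : b ∉ (G.erase B).Forc := fun hh => hbV'.2 (Finset.mem_union_right _ hh)
        by_cases hcB : c ∈ B
        · exact absurd (hB _ _ h2 hcB) hbB
        by_cases hcF : c ∈ (G.erase B).Forc
        · rcases mem_Forc.1 hcF with hc | hc
          · exact Or.inr hc
          · have harc : (G.erase B).rel b c :=
              mem_erase_A.2 ⟨h2, ⟨hbV'.1, hbB⟩, ⟨hcV, hcB⟩⟩
            have hbP : b ∈ (G.erase B).Pred c :=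
              arc_mem_Pred harc (Finset.mem_sdiff.2 ⟨hbV'.1, hbB⟩)
                (Finset.mem_sdiff.2 ⟨hcV, hcB⟩)
            exact absurd (mem_Forc.2 (Or.inr (ForcR_closed hc hbP))) hbF
        · have hcT : c ∉ B ∪ (G.erase B).Forc := by
            intro hh
            rcases Finset.mem_union.1 hh with hh | hh
            · exact hcB hh
            · exact hcF hh
          have harc : (G.erase (B ∪ (G.erase B).Forc)).rel b c :=
            mem_erase_A.2 ⟨h2, ⟨hbV'.1, hbV'.2⟩, ⟨hcV, hcT⟩⟩
          exact Or.inl (mem_Succ_arc hb harc (Finset.mem_sdiff.2 ⟨hcV, hcT⟩))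
      · have hbB : b ∉ B := (Finset.mem_sdiff.1 (ForcL_mem_left hb)).2
        have hbl : b ∈ G.left := (Finset.mem_sdiff.1 (ForcL_mem_left hb)).1
        have hcB : c ∉ B := fun hh => hbB (hB _ _ h2 hh)
        have harc : (G.erase B).rel b c :=
          mem_erase_A.2 ⟨h2, ⟨hwf.2 hbl, hbB⟩, ⟨hcV, hcB⟩⟩
        exact Or.inr (ForcL_closed hb
          (mem_Succ.2 ⟨Finset.mem_sdiff.2 ⟨hcV, hcB⟩, ReflTransGen.single harc⟩))
  rcases key w hpath with h | h
  · exact h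
  · exact absurd (Finset.mem_union_right _ (mem_Forc.2 (Or.inl h))) hwT

lemma succ_stay_succ {G : Pos α} (hwf : G.WF) {B : Finset α}
    (hB : ∀ a b, G.rel a b → a ∈ B → b ∈ B) {u w : α} (hu : u ∈ G.V)
    (huT : u ∉ B ∪ (G.erase B).Forc) (hwT : w ∉ B ∪ (G.erase B).Forc)
    (h : w ∈ G.Succ u) : w ∈ (G.erase (B ∪ (G.erase B).Forc)).Succ u := by
  obtain ⟨hwV, hpath⟩ := mem_Succ.1 h
  have key : ∀ v, Relation.ReflTransGen G.rel u v →
      v ∈ B ∨ v ∈ (G.erase (B ∪ (G.erase B).Forc)).Succ u ∨ v ∈ (G.erase B).ForcL := by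
    intro v hv
    induction hv with
    | refl => exact Or.inr (Or.inl (self_mem_Succ (Finset.mem_sdiff.2 ⟨hu, huT⟩)))
    | @tail b c _ h2 ih =>
      have hcV : c ∈ G.V := (hwf.1 _ h2).2
      rcases ih with hb | hb | hb
      · exact Or.inl (hB _ _ h2 hb)
      · have hbV' : b ∈ G.V ∧ b ∉ B ∪ (G.erase B).Forc :=
          Finset.mem_sdiff.1 (Succ_subset_V hb)
        have hbB : b ∉ B := fun hh => hbV'.2 (Finset.mem_union_left _ hh)
        have hbF : b ∉ (G.erase B).Forc := fun hh => hbV'.2 (Finset.mem_union_right _ hh)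
        by_cases hcB : c ∈ B
        · exact Or.inl hcB
        by_cases hcF : c ∈ (G.erase B).Forc
        · rcases mem_Forc.1 hcF with hc | hc
          · exact Or.inr (Or.inr hc)
          · have harc : (G.erase B).rel b c :=
              mem_erase_A.2 ⟨h2, ⟨hbV'.1, hbB⟩, ⟨hcV, hcB⟩⟩
            have hbP : b ∈ (G.erase B).Pred c :=
              arc_mem_Pred harc (Finset.mem_sdiff.2 ⟨hbV'.1, hbB⟩)
                (Finset.mem_sdiff.2 ⟨hcV, hcB⟩)
            exact absurd (mem_Forc.2 (Or.inr (ForcR_closed hc hbP))) hbF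
        · have hcT : c ∉ B ∪ (G.erase B).Forc := by
            intro hh
            rcases Finset.mem_union.1 hh with hh | hh
            · exact hcB hh
            · exact hcF hh
          have harc : (G.erase (B ∪ (G.erase B).Forc)).rel b c :=
            mem_erase_A.2 ⟨h2, ⟨hbV'.1, hbV'.2⟩, ⟨hcV, hcT⟩⟩
          exact Or.inr (Or.inl (mem_Succ_arc hb harc (Finset.mem_sdiff.2 ⟨hcV, hcT⟩)))
      · have hbB : b ∉ B := (Finset.mem_sdiff.1 (ForcL_mem_left hb)).2
        have hbl : b ∈ G.left := (Finset.mem_sdiff.1 (ForcL_mem_left hb)).1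
        by_cases hcB : c ∈ B
        · exact Or.inl hcB
        · have harc : (G.erase B).rel b c :=
            mem_erase_A.2 ⟨h2, ⟨hwf.2 hbl, hbB⟩, ⟨hcV, hcB⟩⟩
          exact Or.inr (Or.inr (ForcL_closed hb
            (mem_Succ.2 ⟨Finset.mem_sdiff.2 ⟨hcV, hcB⟩, ReflTransGen.single harc⟩)))
  rcases key w hpath with h | h | h
  · exact absurd (Finset.mem_union_left _ h) hwT
  · exact h
  · exact absurd (Finset.mem_union_right _ (mem_Forc.2 (Or.inl h))) hwT

lemma Succ_move {G : Pos α} (hwf : G.WF) {t u : α} (hu : u ∈ (G.move t).V) :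
    (G.move t).Succ u = G.Succ u \ G.Rmv t := by
  obtain ⟨huV, huR⟩ := mem_move_V.1 hu
  ext w
  constructor
  · intro hw
    have h1 : w ∈ G.Succ u := Succ_erase_subset (S := G.Rmv t) hw
    have h2 : w ∉ G.Rmv t := (Finset.mem_sdiff.1 (Succ_subset_V hw)).2
    exact Finset.mem_sdiff.2 ⟨h1, h2⟩
  · intro hw
    obtain ⟨hwS, hwR⟩ := Finset.mem_sdiff.1 hw
    show w ∈ (G.erase (G.Rmv t)).Succ u
    by_cases ht : t ∈ G.left
    · rw [Rmv_eq_left ht] at *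
      exact succ_stay_succ hwf
        (fun a b hab ha => mem_Succ_arc ha hab (hwf.1 _ hab).2) huV huR hwR hwS
    · rw [Rmv_eq_right ht] at *
      exact succ_stay_pred hwf
        (fun a b hab hb => mem_Pred_arc hb hab (hwf.1 _ hab).1) huV huR hwR hwS

lemma Pred_move {G : Pos α} (hwf : G.WF) {t u : α} (hu : u ∈ (G.move t).V) :
    (G.move t).Pred u = G.Pred u \ G.Rmv t := by
  have h0 : (G.move t).Pred u = (rev (G.move t)).Succ u := (rev_Succ _ _).symm
  rw [rev_move hwf] at h0
  have hu' : u ∈ ((rev G).move t).V := by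
    rw [← rev_move hwf]
    exact hu
  rw [h0, Succ_move (rev_WF hwf) hu', rev_Succ, rev_Rmv hwf]

/-! ### Removing both players' removal sets leaves no forced vertex (mixed case) -/

lemma forcL_wg {G : Pos α} (hwf : G.WF) (A : Finset α) {P : Finset α}
    (hP : ∀ a b, G.rel a b → b ∈ P → a ∈ P) :
    (G.erase ((A ∪ (G.erase A).Forc) ∪ (P ∪ (G.erase P).Forc))).ForcL = ∅ := by
  set RA := A ∪ (G.erase A).Forc with hRA
  set RP := P ∪ (G.erase P).Forc with hRP
  rw [Finset.eq_empty_iff_forall_notMem]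
  intro z hz
  obtain ⟨hzl, hsub⟩ := mem_ForcL.1 hz
  obtain ⟨hzl', hzT⟩ := Finset.mem_sdiff.1 hzl
  have hzV : z ∈ G.V := hwf.2 hzl'
  have hzRA : z ∉ RA := fun hh => hzT (Finset.mem_union_left _ hh)
  have hzRP : z ∉ RP := fun hh => hzT (Finset.mem_union_right _ hh)
  have hzA : z ∉ A := fun hh => hzRA (Finset.mem_union_left _ hh)
  have hzFA : z ∉ (G.erase A).Forc := fun hh => hzRA (Finset.mem_union_right _ hh)
  have hzP : z ∉ P := fun hh => hzRP (Finset.mem_union_left _ hh)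
  have hzFP : z ∉ (G.erase P).Forc := fun hh => hzRP (Finset.mem_union_right _ hh)
  -- z is not Left-forced in G.erase A, so it has an escape path avoiding A
  have hnf : z ∉ (G.erase A).ForcL := fun hh => hzFA (mem_Forc.2 (Or.inl hh))
  rw [mem_ForcL] at hnf
  push_neg at hnf
  obtain ⟨w₁, hw₁S, hw₁l⟩ :=
    Finset.not_subset.1 (hnf (Finset.mem_sdiff.2 ⟨hzl', hzA⟩))
  have hw₁V : w₁ ∈ G.V ∧ w₁ ∉ A := Finset.mem_sdiff.1 (Succ_subset_V hw₁S)
  have hw₁nl : w₁ ∉ G.left := by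
    intro hh
    exact hw₁l (Finset.mem_sdiff.2 ⟨hh, hw₁V.2⟩)
  -- invariant along the path from z to w₁ inside G.erase A
  have key : ∀ v, Relation.ReflTransGen (G.erase A).rel z v →
      v ∈ (G.erase (RA ∪ RP)).Succ z ∨ v ∈ (G.erase A).ForcL ∨ v ∈ (G.erase P).ForcL := by
    intro v hv
    induction hv with
    | refl => exact Or.inl (self_mem_Succ (Finset.mem_sdiff.2 ⟨hzV, hzT⟩))
    | @tail b c _ h2 ih =>
      have h2G : G.rel b c := rel_erase h2
      obtain ⟨_, ⟨hbV, hbA⟩, ⟨hcV, hcA⟩⟩ := mem_erase_A.1 h2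
      rcases ih with hb | hb | hb
      · obtain ⟨hbV2, hbT⟩ := Finset.mem_sdiff.1 (Succ_subset_V hb)
        have hbRA : b ∉ RA := fun hh => hbT (Finset.mem_union_left _ hh)
        have hbRP : b ∉ RP := fun hh => hbT (Finset.mem_union_right _ hh)
        have hbP : b ∉ P := fun hh => hbRP (Finset.mem_union_left _ hh)
        by_cases hcP : c ∈ P
        · exact absurd (hP _ _ h2G hcP) hbP
        by_cases hcFP : c ∈ (G.erase P).Forc
        · rcases mem_Forc.1 hcFP with hc | hc
          · exact Or.inr (Or.inr hc)
          · have harc : (G.erase P).rel b c :=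
              mem_erase_A.2 ⟨h2G, ⟨hbV, hbP⟩, ⟨hcV, hcP⟩⟩
            have : b ∈ (G.erase P).Pred c :=
              arc_mem_Pred harc (Finset.mem_sdiff.2 ⟨hbV, hbP⟩)
                (Finset.mem_sdiff.2 ⟨hcV, hcP⟩)
            exact absurd (Finset.mem_union_right _
              (mem_Forc.2 (Or.inr (ForcR_closed hc this)))) hbRP
        by_cases hcFA : c ∈ (G.erase A).Forc
        · rcases mem_Forc.1 hcFA with hc | hc
          · exact Or.inr (Or.inl hc)
          · have : b ∈ (G.erase A).Pred c :=
              arc_mem_Pred h2 (Finset.mem_sdiff.2 ⟨hbV, hbA⟩)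
                (Finset.mem_sdiff.2 ⟨hcV, hcA⟩)
            exact absurd (Finset.mem_union_right _
              (mem_Forc.2 (Or.inr (ForcR_closed hc this)))) hbRA
        · have hcT : c ∉ RA ∪ RP := by
            intro hh
            rcases Finset.mem_union.1 hh with hh | hh
            · rcases Finset.mem_union.1 hh with hh | hh
              · exact hcA hh
              · exact hcFA hh
            · rcases Finset.mem_union.1 hh with hh | hh
              · exact hcP hh
              · exact hcFP hh
          have harc : (G.erase (RA ∪ RP)).rel b c :=
            mem_erase_A.2 ⟨h2G, ⟨hbV, hbT⟩, ⟨hcV, hcT⟩⟩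
          exact Or.inl (mem_Succ_arc hb harc (Finset.mem_sdiff.2 ⟨hcV, hcT⟩))
      · exact Or.inr (Or.inl (ForcL_closed hb
          (mem_Succ.2 ⟨Finset.mem_sdiff.2 ⟨hcV, hcA⟩, ReflTransGen.single h2⟩)))
      · have hbP : b ∉ P := (Finset.mem_sdiff.1 (ForcL_mem_left hb)).2
        have hcP : c ∉ P := fun hh => hbP (hP _ _ h2G hh)
        have harc : (G.erase P).rel b c :=
          mem_erase_A.2 ⟨h2G, ⟨hbV, hbP⟩, ⟨hcV, hcP⟩⟩
        exact Or.inr (Or.inr (ForcL_closed hb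
          (mem_Succ.2 ⟨Finset.mem_sdiff.2 ⟨hcV, hcP⟩, ReflTransGen.single harc⟩)))
  rcases key w₁ (mem_Succ.1 hw₁S).2 with h | h | h
  · exact hw₁nl (Finset.mem_sdiff.1 (hsub h)).1
  · exact hw₁nl (Finset.mem_sdiff.1 (ForcL_mem_left h)).1
  · exact hw₁nl (Finset.mem_sdiff.1 (ForcL_mem_left h)).1

lemma forc_wg {G : Pos α} (hwf : G.WF) {x y : α} (hx : x ∈ G.left) (hyl : y ∉ G.left)
    (hyV : y ∈ G.V) : (G.erase (G.Rmv x ∪ G.Rmv y)).Forc = ∅ := by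
  rw [Finset.eq_empty_iff_forall_notMem]
  intro f hf
  rcases mem_Forc.1 hf with h | h
  · have h2 : (G.erase ((G.Succ x ∪ (G.erase (G.Succ x)).Forc) ∪
        (G.Pred y ∪ (G.erase (G.Pred y)).Forc))).ForcL = ∅ := by
      exact forcL_wg hwf (G.Succ x) (fun a b hab hb => mem_Pred_arc hb hab (hwf.1 _ hab).1)
    rw [← Rmv_eq_left hx, ← Rmv_eq_right hyl] at h2
    rw [h2] at h
    exact Finset.notMem_empty _ h
  · have h0 : f ∈ (rev (G.erase (G.Rmv x ∪ G.Rmv y))).ForcL := by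
      rw [rev_ForcL]; exact h
    rw [rev_erase] at h0
    have hy' : y ∈ (rev G).left := by
      rw [rev_left]; exact mem_R.2 ⟨hyV, hyl⟩
    have hx' : x ∉ (rev G).left := by
      rw [rev_left]; exact fun hh => (mem_R.1 hh).2 hx
    have h2 : ((rev G).erase (((rev G).Succ y ∪ ((rev G).erase ((rev G).Succ y)).Forc) ∪
        ((rev G).Pred x ∪ ((rev G).erase ((rev G).Pred x)).Forc))).ForcL = ∅ := by
      exact forcL_wg (rev_WF hwf) ((rev G).Succ y)
        (fun a b hab hb => mem_Pred_arc hb hab ((rev_WF hwf).1 _ hab).1)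
    rw [← Rmv_eq_left hy', ← Rmv_eq_right hx'] at h2
    rw [rev_Rmv hwf, rev_Rmv hwf, Finset.union_comm (G.Rmv y)] at h2
    rw [h2] at h0
    exact Finset.notMem_empty _ h0

/-! ### Mixed move interaction -/

lemma Rmv_move_mixed {G : Pos α} (hwf : G.WF) {x y : α} (hx : x ∈ G.left)
    (hyl : y ∉ G.left) (hyV : y ∈ G.V) (hxy : x ∉ G.Rmv y) :
    (G.move y).Rmv x = G.Rmv x \ G.Rmv y := by
  have hxV : x ∈ G.V := hwf.2 hx
  have hxl' : x ∈ (G.move y).left := mem_move_left.2 ⟨hx, hxy⟩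
  have hS : (G.move y).Succ x = G.Succ x \ G.Rmv y :=
    Succ_move hwf (mem_move_V.2 ⟨hxV, hxy⟩)
  have hRmv' : (G.move y).Rmv x =
      (G.move y).Succ x ∪ ((G.move y).erase ((G.move y).Succ x)).Forc := Rmv_eq_left hxl'
  have hpos : (G.move y).erase ((G.move y).Succ x) = G.erase (G.Rmv y ∪ G.Succ x) := by
    rw [hS]
    show (G.erase (G.Rmv y)).erase _ = _
    rw [erase_erase]
    apply erase_congr
    ext a
    simp only [Finset.mem_union, Finset.mem_sdiff]
    tauto
  have hRx : G.Rmv x = G.Succ x ∪ (G.erase (G.Succ x)).Forc := Rmv_eq_left hx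
  apply Finset.Subset.antisymm
  · intro g hg
    rw [hRmv', hpos] at hg
    rcases Finset.mem_union.1 hg with hg | hg
    · rw [hS] at hg
      obtain ⟨hg1, hg2⟩ := Finset.mem_sdiff.1 hg
      exact Finset.mem_sdiff.2 ⟨hRx ▸ Finset.mem_union_left _ hg1, hg2⟩
    · have hgRyA : g ∉ G.Rmv y ∪ G.Succ x := forc_not_mem hg
      have hgRy : g ∉ G.Rmv y := fun hh => hgRyA (Finset.mem_union_left _ hh)
      have hgA : g ∉ G.Succ x := fun hh => hgRyA (Finset.mem_union_right _ hh)
      refine Finset.mem_sdiff.2 ⟨?_, hgRy⟩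
      by_contra hgRx
      have hsub : G.Rmv y ∪ G.Succ x ⊆ G.Rmv x ∪ G.Rmv y := by
        apply Finset.union_subset
        · exact fun a ha => Finset.mem_union_right _ ha
        · exact fun a ha => Finset.mem_union_left _ (hRx ▸ Finset.mem_union_left _ ha)
      have hgT : g ∉ G.Rmv x ∪ G.Rmv y := by
        intro hh
        rcases Finset.mem_union.1 hh with hh | hh
        · exact hgRx hh
        · exact hgRy hh
      have := forc_mono hg hsub hgT
      rw [forc_wg hwf hx hyl hyV] at this
      exact Finset.notMem_empty _ this
  · intro g hg
    obtain ⟨hgRx, hgRy⟩ := Finset.mem_sdiff.1 hg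
    rw [hRx] at hgRx
    rw [hRmv', hpos]
    rcases Finset.mem_union.1 hgRx with hg1 | hg1
    · apply Finset.mem_union_left
      rw [hS]
      exact Finset.mem_sdiff.2 ⟨hg1, hgRy⟩
    · apply Finset.mem_union_right
      have hgA : g ∉ G.Succ x := forc_not_mem hg1
      apply forc_mono hg1 (fun a ha => Finset.mem_union_right _ ha)
      intro hh
      rcases Finset.mem_union.1 hh with hh | hh
      · exact hgRy hh
      · exact hgA hh

lemma Rmv_move_mixed' {G : Pos α} (hwf : G.WF) {x y : α} (hx : x ∈ G.left)
    (hyl : y ∉ G.left) (hyV : y ∈ G.V) (hyx : y ∉ G.Rmv x) :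
    (G.move x).Rmv y = G.Rmv y \ G.Rmv x := by
  have hy' : y ∈ (rev G).left := by rw [rev_left]; exact mem_R.2 ⟨hyV, hyl⟩
  have hx' : x ∉ (rev G).left := by rw [rev_left]; exact fun hh => (mem_R.1 hh).2 hx
  have hxV : x ∈ (rev G).V := hwf.2 hx
  have h := Rmv_move_mixed (rev_WF hwf) hy' hx' hxV (by rwa [rev_Rmv hwf])
  rw [← rev_move hwf, rev_Rmv (move_WF hwf x), rev_Rmv hwf, rev_Rmv hwf] at h
  exact h

lemma move_move_mixed {G : Pos α} (hwf : G.WF) {x y : α} (hx : x ∈ G.left)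
    (hyl : y ∉ G.left) (hyV : y ∈ G.V) (hxy : x ∉ G.Rmv y) (hyx : y ∉ G.Rmv x) :
    (G.move y).move x = (G.move x).move y := by
  show ((G.erase (G.Rmv y)).erase ((G.move y).Rmv x)) =
    ((G.erase (G.Rmv x)).erase ((G.move x).Rmv y))
  rw [erase_erase, erase_erase, Rmv_move_mixed hwf hx hyl hyV hxy,
    Rmv_move_mixed' hwf hx hyl hyV hyx]
  apply erase_congr
  ext a
  simp only [Finset.mem_union, Finset.mem_sdiff]
  tauto

/-! ### In a relevant position non-removal is symmetric between opposite sides -/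

lemma not_mem_Rmv_symm {G : Pos α} (hwf : G.WF) (hrel : G.Relevant) {x y : α}
    (hx : x ∈ G.left) (hyl : y ∉ G.left) (hyV : y ∈ G.V) (hxy : x ∉ G.Rmv y) :
    y ∉ G.Rmv x := by
  intro hyx
  rw [Rmv_eq_left hx] at hyx
  rcases Finset.mem_union.1 hyx with h | h
  · apply hxy
    rw [Rmv_eq_right hyl]
    exact Finset.mem_union_left _ (mem_Pred_of_mem_Succ h (hwf.2 hx))
  · have hyA : y ∉ G.Succ x := forc_not_mem h
    have hfr : y ∈ (G.erase (G.Succ x)).ForcR := by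
      rcases mem_Forc.1 h with h | h
      · exact absurd (Finset.mem_sdiff.1 (ForcL_mem_left h)).1 hyl
      · exact h
    have key : ∀ u, Relation.ReflTransGen G.rel u y → u ∈ G.V →
        u ∈ (G.erase (G.Succ x)).Pred y := by
      intro u hu
      induction hu using Relation.ReflTransGen.head_induction_on with
      | refl => exact fun _ => self_mem_Pred (Finset.mem_sdiff.2 ⟨hyV, hyA⟩)
      | @head a c h' h'' ih =>
        intro haV
        have hcV : c ∈ G.V := (hwf.1 _ h').2
        have haA : a ∉ G.Succ x := by
          intro hh
          exact hyA (mem_Succ_trans hh (mem_Succ.2 ⟨hyV, ReflTransGen.head h' h''⟩))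
        have hcih := ih hcV
        have hcA : c ∉ G.Succ x := (Finset.mem_sdiff.1 (Pred_subset_V hcih)).2
        have harc : (G.erase (G.Succ x)).rel a c :=
          mem_erase_A.2 ⟨h', ⟨haV, haA⟩, ⟨hcV, hcA⟩⟩
        exact mem_Pred_arc hcih harc (Finset.mem_sdiff.2 ⟨haV, haA⟩)
    have hyF : y ∈ G.ForcR := by
      apply mem_ForcR.2
      refine ⟨mem_R.2 ⟨hyV, hyl⟩, ?_⟩
      intro u hu
      have hu' := key u (mem_Pred.1 hu).2 (mem_Pred.1 hu).1
      have := (mem_ForcR.1 hfr).2 hu'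
      rw [mem_R] at this ⊢
      refine ⟨(mem_Pred.1 hu).1, ?_⟩
      intro hul
      exact this.2 (Finset.mem_sdiff.2 ⟨hul, (Finset.mem_sdiff.1 this.1).2⟩)
    have : y ∈ G.Forc := mem_Forc.2 (Or.inr hyF)
    rw [hrel] at this
    exact Finset.notMem_empty _ this

/-! ### Same-side move interaction -/

lemma Rmv_sdiff_subset {G : Pos α} (hwf : G.WF) {t u : α} (huV : u ∈ G.V)
    (hul : u ∉ G.left) (hut : u ∉ G.Rmv t) :
    G.Rmv u \ G.Rmv t ⊆ (G.move t).Rmv u := by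
  have hu' : u ∈ (G.move t).V := mem_move_V.2 ⟨huV, hut⟩
  have hul' : u ∉ (G.move t).left := fun h => hul (mem_move_left.1 h).1
  have hP : (G.move t).Pred u = G.Pred u \ G.Rmv t := Pred_move hwf hu'
  have hRu : G.Rmv u = G.Pred u ∪ (G.erase (G.Pred u)).Forc := Rmv_eq_right hul
  have hRu' : (G.move t).Rmv u =
      (G.move t).Pred u ∪ ((G.move t).erase ((G.move t).Pred u)).Forc := Rmv_eq_right hul'
  have hpos : (G.move t).erase ((G.move t).Pred u) = G.erase (G.Rmv t ∪ G.Pred u) := by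
    rw [hP]
    show (G.erase (G.Rmv t)).erase _ = _
    rw [erase_erase]
    apply erase_congr
    ext a
    simp only [Finset.mem_union, Finset.mem_sdiff]
    tauto
  intro g hg
  obtain ⟨hgu, hgt⟩ := Finset.mem_sdiff.1 hg
  rw [hRu] at hgu
  rw [hRu', hpos]
  rcases Finset.mem_union.1 hgu with h | h
  · exact Finset.mem_union_left _ (hP ▸ Finset.mem_sdiff.2 ⟨h, hgt⟩)
  · apply Finset.mem_union_right
    apply forc_mono h (fun a ha => Finset.mem_union_right _ ha)
    intro hh
    rcases Finset.mem_union.1 hh with hh | hh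
    · exact hgt hh
    · exact (forc_not_mem h) hh

lemma Rmv_subset_Rmv {G : Pos α} (hwf : G.WF) {y y' : α} (hyl : y ∉ G.left)
    (hy'l : y' ∉ G.left) (h : y' ∈ G.Rmv y) : G.Rmv y' ⊆ G.Rmv y := by
  have hRy : G.Rmv y = G.Pred y ∪ (G.erase (G.Pred y)).Forc := Rmv_eq_right hyl
  have h1 : G.Pred y' ⊆ G.Rmv y := by
    rw [hRy] at h
    rcases Finset.mem_union.1 h with hp | hf
    · intro u hu
      rw [hRy]
      exact Finset.mem_union_left _ (mem_Pred_trans hu hp)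
    · have hfr : y' ∈ (G.erase (G.Pred y)).ForcR := by
        rcases mem_Forc.1 hf with hc | hc
        · exact absurd (Finset.mem_sdiff.1 (ForcL_mem_left hc)).1 hy'l
        · exact hc
      have hy'P : y' ∉ G.Pred y := forc_not_mem hf
      have hy'V : y' ∈ G.V := (Finset.mem_sdiff.1 (mem_R.1 (ForcR_mem_R hfr)).1).1
      intro u hu
      have key : ∀ v, Relation.ReflTransGen G.rel v y' → v ∈ G.V →
          v ∈ G.Pred y ∨ v ∈ (G.erase (G.Pred y)).Pred y' := by
        intro v hv
        induction hv using Relation.ReflTransGen.head_induction_on with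
        | refl => exact fun _ => Or.inr (self_mem_Pred (Finset.mem_sdiff.2 ⟨hy'V, hy'P⟩))
        | @head a c h' h'' ih =>
          intro haV
          have hcV : c ∈ G.V := (hwf.1 _ h').2
          rcases ih hcV with hc | hc
          · exact Or.inl (mem_Pred_arc hc h' haV)
          · by_cases haP : a ∈ G.Pred y
            · exact Or.inl haP
            · have hcP : c ∉ G.Pred y := (Finset.mem_sdiff.1 (Pred_subset_V hc)).2
              have harc : (G.erase (G.Pred y)).rel a c :=
                mem_erase_A.2 ⟨h', ⟨haV, haP⟩, ⟨hcV, hcP⟩⟩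
              exact Or.inr (mem_Pred_arc hc harc (Finset.mem_sdiff.2 ⟨haV, haP⟩))
      rcases key u (mem_Pred.1 hu).2 (mem_Pred.1 hu).1 with hc | hc
      · rw [hRy]; exact Finset.mem_union_left _ hc
      · rw [hRy]
        exact Finset.mem_union_right _ (mem_Forc.2 (Or.inr (ForcR_closed hfr hc)))
  have h2 : (G.erase (G.Pred y')).Forc ⊆ G.Rmv y := by
    intro f hf
    by_contra hfR
    have hf2 : f ∈ (G.erase (G.Rmv y)).Forc := forc_mono hf h1 hfR
    have : (G.erase (G.Rmv y)).Forc = ∅ := relevant_move hwf y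
    rw [this] at hf2
    exact Finset.notMem_empty _ hf2
  rw [Rmv_eq_right hy'l]
  exact Finset.union_subset h1 h2

lemma move_move_nested {G : Pos α} (hwf : G.WF) {y y' : α} (hyl : y ∉ G.left)
    (hy'l : y' ∉ G.left) (hyV : y ∈ G.V) (h1 : y' ∈ G.Rmv y) (h2 : y ∉ G.Rmv y') :
    (G.move y').move y = G.move y := by
  have hsub : G.Rmv y' ⊆ G.Rmv y := Rmv_subset_Rmv hwf hyl hy'l h1
  have hy'' : y ∈ (G.move y').V := mem_move_V.2 ⟨hyV, h2⟩
  have hyl'' : y ∉ (G.move y').left := fun h => hyl (mem_move_left.1 h).1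
  have e1 : (G.move y').Rmv y = G.Rmv y \ G.Rmv y' := by
    apply Finset.Subset.antisymm
    · have hP : (G.move y').Pred y = G.Pred y \ G.Rmv y' := Pred_move hwf hy''
      have hpos : (G.move y').erase ((G.move y').Pred y) =
          G.erase (G.Rmv y' ∪ G.Pred y) := by
        rw [hP]
        show (G.erase (G.Rmv y')).erase _ = _
        rw [erase_erase]
        apply erase_congr
        ext a
        simp only [Finset.mem_union, Finset.mem_sdiff]
        tauto
      rw [Rmv_eq_right hyl'', hpos]
      apply Finset.union_subset
      · rw [hP]
        intro a ha
        obtain ⟨ha1, ha2⟩ := Finset.mem_sdiff.1 ha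
        refine Finset.mem_sdiff.2 ⟨?_, ha2⟩
        rw [Rmv_eq_right hyl]
        exact Finset.mem_union_left _ ha1
      · intro f hf
        have hfRy' : f ∉ G.Rmv y' ∪ G.Pred y := forc_not_mem hf
        have hf1 : f ∉ G.Rmv y' := fun hh => hfRy' (Finset.mem_union_left _ hh)
        refine Finset.mem_sdiff.2 ⟨?_, hf1⟩
        by_contra hfRy
        have hsub2 : G.Rmv y' ∪ G.Pred y ⊆ G.Rmv y := by
          apply Finset.union_subset hsub
          intro a ha
          rw [Rmv_eq_right hyl]
          exact Finset.mem_union_left _ ha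
        have hf2 := forc_mono hf hsub2 hfRy
        have : (G.erase (G.Rmv y)).Forc = ∅ := relevant_move hwf y
        rw [this] at hf2
        exact Finset.notMem_empty _ hf2
    · exact Rmv_sdiff_subset hwf hyV hyl h2
  show (G.erase (G.Rmv y')).erase ((G.move y').Rmv y) = G.erase (G.Rmv y)
  rw [e1, erase_erase]
  apply erase_congr
  ext a
  simp only [Finset.mem_union, Finset.mem_sdiff]
  constructor
  · rintro (h | ⟨h, _⟩)
    · exact hsub h
    · exact h
  · intro h
    by_cases h' : a ∈ G.Rmv y'
    · exact Or.inl h'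
    · exact Or.inr ⟨h, h'⟩

lemma move_move_comm_right {G : Pos α} (hwf : G.WF) {y y' : α} (hyl : y ∉ G.left)
    (hy'l : y' ∉ G.left) (hyV : y ∈ G.V) (hy'V : y' ∈ G.V)
    (h1 : y' ∉ G.Rmv y) (h2 : y ∉ G.Rmv y') :
    (G.move y).move y' = (G.move y').move y := by
  have key : ∀ a b : α, a ∉ G.left → b ∉ G.left → a ∈ G.V → b ∈ G.V →
      b ∉ G.Rmv a → a ∉ G.Rmv b →
      G.Rmv a ∪ (G.move a).Rmv b ⊆ G.Rmv b ∪ (G.move b).Rmv a := by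
    intro a b hal hbl haV hbV hba hab
    have hRa_sub : G.Rmv a ⊆ G.Rmv b ∪ (G.move b).Rmv a := by
      intro g hg
      by_cases hgb : g ∈ G.Rmv b
      · exact Finset.mem_union_left _ hgb
      · exact Finset.mem_union_right _
          (Rmv_sdiff_subset hwf haV hal hab (Finset.mem_sdiff.2 ⟨hg, hgb⟩))
    apply Finset.union_subset hRa_sub
    have hb' : b ∈ (G.move a).V := mem_move_V.2 ⟨hbV, hba⟩
    have hbl' : b ∉ (G.move a).left := fun h => hbl (mem_move_left.1 h).1
    have hP : (G.move a).Pred b = G.Pred b \ G.Rmv a := Pred_move hwf hb'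
    have hpos : (G.move a).erase ((G.move a).Pred b) = G.erase (G.Rmv a ∪ G.Pred b) := by
      rw [hP]
      show (G.erase (G.Rmv a)).erase _ = _
      rw [erase_erase]
      apply erase_congr
      ext c
      simp only [Finset.mem_union, Finset.mem_sdiff]
      tauto
    rw [Rmv_eq_right hbl', hpos]
    apply Finset.union_subset
    · rw [hP]
      intro c hc
      apply Finset.mem_union_left
      rw [Rmv_eq_right hbl]
      exact Finset.mem_union_left _ (Finset.mem_sdiff.1 hc).1
    · intro f hf
      by_contra hfT
      have hsub2 : G.Rmv a ∪ G.Pred b ⊆ G.Rmv b ∪ (G.move b).Rmv a := by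
        apply Finset.union_subset hRa_sub
        intro c hc
        apply Finset.mem_union_left
        rw [Rmv_eq_right hbl]
        exact Finset.mem_union_left _ hc
      have hf2 := forc_mono hf hsub2 hfT
      have hmm : G.erase (G.Rmv b ∪ (G.move b).Rmv a) = (G.move b).move a := by
        show _ = (G.erase (G.Rmv b)).erase ((G.move b).Rmv a)
        rw [erase_erase]
      rw [hmm] at hf2
      have : ((G.move b).move a).Forc = ∅ := relevant_move (move_WF hwf b) a
      rw [this] at hf2
      exact Finset.notMem_empty _ hf2
  show (G.erase (G.Rmv y)).erase ((G.move y).Rmv y') =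
    (G.erase (G.Rmv y')).erase ((G.move y').Rmv y)
  rw [erase_erase, erase_erase]
  apply erase_congr
  exact Finset.Subset.antisymm (key y y' hyl hy'l hyV hy'V h1 h2)
    (key y' y hy'l hyl hy'V hyV h2 h1)

/-! ### Score basics : fuel independence -/

lemma sL1Aux_zeroV {G : Pos α} (hwf : G.WF) (h : G.V = ∅) (k : ℕ) : sL1Aux k G = 0 := by
  cases k with
  | zero => rw [sL1Aux]
  | succ k =>
    rw [sL1Aux, if_neg]
    intro ⟨x, hx⟩
    rw [Finset.eq_empty_iff_forall_notMem] at h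
    exact h x (hwf.2 hx)

lemma sL2Aux_zeroV {G : Pos α} (h : G.V = ∅) (k : ℕ) : sL2Aux k G = 0 := by
  cases k with
  | zero => rw [sL2Aux]
  | succ k =>
    rw [sL2Aux, dif_neg]
    intro ⟨y, hy⟩
    rw [Finset.eq_empty_iff_forall_notMem] at h
    exact h y (mem_R.1 hy).1

lemma card_move_le {G : Pos α} {u : α} (hu : u ∈ G.V) {m : ℕ} (hm : G.V.card ≤ m + 1) :
    (G.move u).V.card ≤ m := by
  have := card_move_lt (G := G) hu
  omega

lemma aux_fuel : ∀ (c : ℕ) (G : Pos α), G.WF → G.V.card ≤ c →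
    ∀ k₁ k₂, G.V.card ≤ k₁ → G.V.card ≤ k₂ →
      sL1Aux k₁ G = sL1Aux k₂ G ∧ sL2Aux k₁ G = sL2Aux k₂ G := by
  intro c
  induction c with
  | zero =>
    intro G hwf hc k₁ k₂ _ _
    have hV : G.V = ∅ := Finset.card_eq_zero.1 (Nat.le_zero.1 hc)
    rw [sL1Aux_zeroV hwf hV, sL1Aux_zeroV hwf hV, sL2Aux_zeroV hV, sL2Aux_zeroV hV]
    exact ⟨rfl, rfl⟩
  | succ c ih =>
    intro G hwf hc k₁ k₂ h₁ h₂
    by_cases hV : G.V = ∅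
    · rw [sL1Aux_zeroV hwf hV, sL1Aux_zeroV hwf hV, sL2Aux_zeroV hV, sL2Aux_zeroV hV]
      exact ⟨rfl, rfl⟩
    · have hcard : 1 ≤ G.V.card := Nat.one_le_iff_ne_zero.2 (fun hh =>
        hV (Finset.card_eq_zero.1 hh))
      obtain ⟨a, rfl⟩ : ∃ a, k₁ = a + 1 := ⟨k₁ - 1, by omega⟩
      obtain ⟨b, rfl⟩ : ∃ b, k₂ = b + 1 := ⟨k₂ - 1, by omega⟩
      constructor
      · rw [sL1Aux, sL1Aux]
        by_cases hne : G.left.Nonempty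
        · rw [if_pos hne, if_pos hne]
          apply Finset.sup_congr rfl
          intro x hx
          have hxV : x ∈ G.V := hwf.2 hx
          have hmc : (G.move x).V.card ≤ c := by
            have := card_move_lt (G := G) hxV
            omega
          rw [(ih (G.move x) (move_WF hwf x) hmc a b
            (card_move_le hxV h₁) (card_move_le hxV h₂)).2]
        · rw [if_neg hne, if_neg hne]
      · rw [sL2Aux, sL2Aux]
        by_cases hne : G.R.Nonempty
        · rw [dif_pos hne, dif_pos hne]
          apply Finset.inf'_congr hne rfl
          intro y hy
          have hyV : y ∈ G.V := (mem_R.1 hy).1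
          have hmc : (G.move y).V.card ≤ c := by
            have := card_move_lt (G := G) hyV
            omega
          rw [(ih (G.move y) (move_WF hwf y) hmc a b
            (card_move_le hyV h₁) (card_move_le hyV h₂)).1]
        · rw [dif_neg hne, dif_neg hne]

lemma sL1Aux_eq {G : Pos α} (hwf : G.WF) {k : ℕ} (h : G.V.card ≤ k) :
    sL1Aux k G = G.sL1 :=
  (aux_fuel G.V.card G hwf le_rfl k G.V.card h le_rfl).1

lemma sL2Aux_eq {G : Pos α} (hwf : G.WF) {k : ℕ} (h : G.V.card ≤ k) :
    sL2Aux k G = G.sL2 :=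
  (aux_fuel G.V.card G hwf le_rfl k G.V.card h le_rfl).2

lemma sL1_eq_sup {G : Pos α} (hwf : G.WF) (hne : G.left.Nonempty) :
    G.sL1 = G.left.sup (fun x => (G.Rmv x).card + (G.move x).sL2) := by
  obtain ⟨x₀, hx₀⟩ := id hne
  have hV : G.V.Nonempty := ⟨x₀, hwf.2 hx₀⟩
  obtain ⟨m, hm⟩ : ∃ m, G.V.card = m + 1 := by
    have := Finset.card_pos.2 hV
    exact ⟨G.V.card - 1, by omega⟩
  show sL1Aux G.V.card G = _
  rw [hm, sL1Aux, if_pos hne]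
  apply Finset.sup_congr rfl
  intro x hx
  rw [sL2Aux_eq (move_WF hwf x) (card_move_le (hwf.2 hx) (le_of_eq hm))]

lemma sL1_eq_zero {G : Pos α} (h : G.left = ∅) : G.sL1 = 0 := by
  show sL1Aux G.V.card G = 0
  cases hk : G.V.card with
  | zero => rw [sL1Aux]
  | succ m =>
    rw [sL1Aux, if_neg]
    rw [h]
    exact Finset.not_nonempty_empty

lemma sL1_le {G : Pos α} (hwf : G.WF) {b : ℕ}
    (h : ∀ x ∈ G.left, (G.Rmv x).card + (G.move x).sL2 ≤ b) : G.sL1 ≤ b := by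
  by_cases hne : G.left.Nonempty
  · rw [sL1_eq_sup hwf hne]
    exact Finset.sup_le h
  · rw [sL1_eq_zero (Finset.not_nonempty_iff_eq_empty.1 hne)]
    exact Nat.zero_le _

lemma le_sL1 {G : Pos α} (hwf : G.WF) {x : α} (hx : x ∈ G.left) :
    (G.Rmv x).card + (G.move x).sL2 ≤ G.sL1 := by
  rw [sL1_eq_sup hwf ⟨x, hx⟩]
  exact Finset.le_sup (f := fun x => (G.Rmv x).card + (G.move x).sL2) hx

lemma sL2_eq_zero {G : Pos α} (h : G.R = ∅) : G.sL2 = 0 := by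
  show sL2Aux G.V.card G = 0
  cases hk : G.V.card with
  | zero => rw [sL2Aux]
  | succ m =>
    rw [sL2Aux, dif_neg]
    rw [h]
    exact Finset.not_nonempty_empty

lemma sL2_le {G : Pos α} (hwf : G.WF) {y : α} (hy : y ∈ G.R) :
    G.sL2 ≤ (G.move y).sL1 := by
  have hyV : y ∈ G.V := (mem_R.1 hy).1
  obtain ⟨m, hm⟩ : ∃ m, G.V.card = m + 1 := by
    have := Finset.card_pos.2 ⟨y, hyV⟩
    exact ⟨G.V.card - 1, by omega⟩
  show sL2Aux G.V.card G ≤ _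
  rw [hm, sL2Aux, dif_pos ⟨y, hy⟩]
  have h1 : sL1Aux m (G.move y) = (G.move y).sL1 :=
    sL1Aux_eq (move_WF hwf y) (card_move_le hyV (le_of_eq hm))
  calc G.R.inf' ⟨y, hy⟩ (fun y' => sL1Aux m (G.move y')) ≤ sL1Aux m (G.move y) :=
        Finset.inf'_le _ hy
    _ = _ := h1

lemma le_sL2 {G : Pos α} (hwf : G.WF) (hne : G.R.Nonempty) {b : ℕ}
    (h : ∀ y ∈ G.R, b ≤ (G.move y).sL1) : b ≤ G.sL2 := by
  obtain ⟨y₀, hy₀⟩ := hne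
  obtain ⟨m, hm⟩ : ∃ m, G.V.card = m + 1 := by
    have := Finset.card_pos.2 ⟨y₀, (mem_R.1 hy₀).1⟩
    exact ⟨G.V.card - 1, by omega⟩
  show b ≤ sL2Aux G.V.card G
  rw [hm, sL2Aux, dif_pos ⟨y₀, hy₀⟩]
  apply Finset.le_inf'
  intro y hy
  rw [sL1Aux_eq (move_WF hwf y) (card_move_le ((mem_R.1 hy).1) (le_of_eq hm))]
  exact h y hy

/-! ### Reversal and scores -/

lemma rev_aux : ∀ (k : ℕ) (G : Pos α), G.WF →
    sL1Aux k (rev G) = sR1Aux k G ∧ sL2Aux k (rev G) = sR2Aux k G := by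
  intro k
  induction k with
  | zero =>
    intro G hwf
    rw [sL1Aux, sR1Aux, sL2Aux, sR2Aux]
    exact ⟨rfl, rfl⟩
  | succ k ih =>
    intro G hwf
    constructor
    · rw [sL1Aux, sR1Aux, rev_left]
      by_cases hne : G.R.Nonempty
      · rw [if_pos hne, if_pos hne]
        apply Finset.sup_congr rfl
        intro y hy
        rw [rev_Rmv hwf, ← rev_move hwf, (ih (G.move y) (move_WF hwf y)).2]
      · rw [if_neg hne, if_neg hne]
    · rw [sL2Aux, sR2Aux]
      have hR : (rev G).R = G.left := rev_R hwf
      by_cases hne : G.left.Nonempty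
      · have hne' : (rev G).R.Nonempty := by rw [hR]; exact hne
        rw [dif_pos hne', dif_pos hne]
        apply Finset.inf'_congr hne' hR
        intro x hx
        rw [← rev_move hwf, (ih (G.move x) (move_WF hwf x)).1]
      · have hne' : ¬ (rev G).R.Nonempty := by rw [hR]; exact hne
        rw [dif_neg hne', dif_neg hne]

lemma rev_sL1 {G : Pos α} (hwf : G.WF) : (rev G).sL1 = G.sR1 := by
  show sL1Aux (rev G).V.card (rev G) = sR1Aux G.V.card G
  rw [rev_V]
  exact (rev_aux G.V.card G hwf).1

lemma rev_sL2 {G : Pos α} (hwf : G.WF) : (rev G).sL2 = G.sR2 := by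
  show sL2Aux (rev G).V.card (rev G) = sR2Aux G.V.card G
  rw [rev_V]
  exact (rev_aux G.V.card G hwf).2

/-! ### Main induction -/

theorem mainL : ∀ (n : ℕ) (G : Pos α), G.V.card ≤ n → G.WF → G.Relevant →
    ∀ y ∈ G.R, (G.move y).sL1 ≤ G.sL1 ∧ (G.move y).sL2 ≤ G.sL2 := by
  intro n
  induction n with
  | zero =>
    intro G hc _ _ y hy
    have hV : G.V = ∅ := Finset.card_eq_zero.1 (Nat.le_zero.1 hc)
    rw [Finset.eq_empty_iff_forall_notMem] at hV
    exact absurd (mem_R.1 hy).1 (hV y)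
  | succ n ih =>
    intro G hc hwf hrel y hyR
    obtain ⟨hyV, hyl⟩ := mem_R.1 hyR
    have hHwf : (G.move y).WF := move_WF hwf y
    have hHrel : (G.move y).Relevant := relevant_move hwf y
    have hHcard : (G.move y).V.card ≤ n := by
      have := card_move_lt (G := G) hyV
      omega
    have hsL2sL1 : ∀ K : Pos α, K.V.card ≤ n → K.WF → K.Relevant → K.sL2 ≤ K.sL1 := by
      intro K hKc hKwf hKrel
      by_cases hKR : K.R.Nonempty
      · obtain ⟨y₀, hy₀⟩ := hKR
        calc K.sL2 ≤ (K.move y₀).sL1 := sL2_le hKwf hy₀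
          _ ≤ K.sL1 := (ih K hKc hKwf hKrel y₀ hy₀).1
      · rw [sL2_eq_zero (Finset.not_nonempty_iff_eq_empty.1 hKR)]
        exact Nat.zero_le _
    constructor
    · -- sL1 part
      apply sL1_le hHwf
      intro x hxH
      obtain ⟨hxl, hxRy⟩ := mem_move_left.1 hxH
      have hyx : y ∉ G.Rmv x := not_mem_Rmv_symm hwf hrel hxl hyl hyV hxRy
      have hxV : x ∈ G.V := hwf.2 hxl
      have e1 : (G.move y).Rmv x = G.Rmv x \ G.Rmv y :=
        Rmv_move_mixed hwf hxl hyl hyV hxRy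
      have e2 : (G.move y).move x = (G.move x).move y :=
        move_move_mixed hwf hxl hyl hyV hxRy hyx
      have hGxc : (G.move x).V.card ≤ n := by
        have := card_move_lt (G := G) hxV
        omega
      have hyRx : y ∈ (G.move x).R :=
        mem_move_R.2 ⟨hyR, hyx⟩
      have e3 : ((G.move x).move y).sL2 ≤ (G.move x).sL2 :=
        (ih (G.move x) hGxc (move_WF hwf x) (relevant_move hwf x) y hyRx).2
      calc ((G.move y).Rmv x).card + ((G.move y).move x).sL2
          ≤ (G.Rmv x).card + (G.move x).sL2 := by
            apply Nat.add_le_add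
            · rw [e1]
              exact Finset.card_le_card Finset.sdiff_subset
            · rw [e2]
              exact e3
        _ ≤ G.sL1 := le_sL1 hwf hxl
    · -- sL2 part
      apply le_sL2 hwf ⟨y, hyR⟩
      intro y' hy'R
      obtain ⟨hy'V, hy'l⟩ := mem_R.1 hy'R
      have hKwf : (G.move y').WF := move_WF hwf y'
      have hKrel : (G.move y').Relevant := relevant_move hwf y'
      have hKc : (G.move y').V.card ≤ n := by
        have := card_move_lt (G := G) hy'V
        omega
      by_cases hyy' : y' = y
      · subst hyy'
        exact hsL2sL1 _ hHcard hHwf hHrel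
      by_cases h1 : y' ∈ G.Rmv y
      · by_cases h2 : y ∈ G.Rmv y'
        · -- equal removal sets
          have hRR : G.Rmv y = G.Rmv y' :=
            Finset.Subset.antisymm (Rmv_subset_Rmv hwf hy'l hyl h2)
              (Rmv_subset_Rmv hwf hyl hy'l h1)
          have hHK : G.move y = G.move y' := by
            show G.erase (G.Rmv y) = G.erase (G.Rmv y')
            rw [hRR]
          rw [hHK]
          exact hsL2sL1 _ hKc hKwf hKrel
        · -- nested : (G.move y').move y = G.move y
          have e := move_move_nested hwf hyl hy'l hyV h1 h2
          have hyRy' : y ∈ (G.move y').R := mem_move_R.2 ⟨hyR, h2⟩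
          calc (G.move y).sL2 = ((G.move y').move y).sL2 := by rw [e]
            _ ≤ (G.move y').sL2 := (ih (G.move y') hKc hKwf hKrel y hyRy').2
            _ ≤ (G.move y').sL1 := hsL2sL1 _ hKc hKwf hKrel
      · -- y' survives in G.move y
        have hy'H : y' ∈ (G.move y).R := mem_move_R.2 ⟨hy'R, h1⟩
        have step1 : (G.move y).sL2 ≤ ((G.move y).move y').sL1 := sL2_le hHwf hy'H
        by_cases h2 : y ∈ G.Rmv y'
        · -- nested the other way : (G.move y).move y' = G.move y'
          have e := move_move_nested hwf hy'l hyl hy'V h2 h1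
          rw [e] at step1
          exact step1
        · -- commutation
          have ecomm := move_move_comm_right hwf hyl hy'l hyV hy'V h1 h2
          rw [ecomm] at step1
          have hyRy' : y ∈ (G.move y').R := mem_move_R.2 ⟨hyR, h2⟩
          calc (G.move y).sL2 ≤ ((G.move y').move y).sL1 := step1
            _ ≤ (G.move y').sL1 := (ih (G.move y') hKc hKwf hKrel y hyRy').1

end Pos
end Influence

open Influence Influence.Pos Finset

/-- a move of the opponent cannot increase a player's score. -/
theorem influence_move_score_le {α : Type} [DecidableEq α] (G : Pos α)
    (hwf : G.WF) (hrel : G.Relevant) :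
    (∀ y ∈ G.R, (G.move y).sL1 ≤ G.sL1 ∧ (G.move y).sL2 ≤ G.sL2) ∧
    (∀ x ∈ G.left, (G.move x).sR1 ≤ G.sR1 ∧ (G.move x).sR2 ≤ G.sR2) := by
  constructor
  · intro y hy
    exact mainL G.V.card G le_rfl hwf hrel y hy
  · intro x hx
    have hx' : x ∈ (rev G).R := by rw [rev_R hwf]; exact hx
    have h1 := mainL (rev G).V.card (rev G) le_rfl (rev_WF hwf)
      ((rev_Relevant hwf).2 hrel) x hx'
    rw [← rev_move hwf, rev_sL1 (move_WF hwf x), rev_sL1 hwf,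
      rev_sL2 (move_WF hwf x), rev_sL2 hwf] at h1
    exact h1
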